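/- arXiv:1507.00631 — 7 statements merged into one kernel-verified Lean document; each statement's English description precedes it below -/
import Mathlib

section
/- Let f : ℝ → ℝ be a continuous function satisfying f(z₂) + e^{-z₂}·f(z₁) = f(z₁ + z₂) for all z₁, z₂ ∈ ℝ. Then there exists a constant K ∈ ℝ such that f(z) = K·(1 - e^{-z}) for all z ∈ ℝ. -/
theorem functional_eq_solution (f : ℝ → ℝ) (hf : Continuous f)
    (h : ∀ z₁ z₂ : ℝ, f z₂ + Real.exp (-z₂) * f z₁ = f (z₁ + z₂)) :
    ∃ K : ℝ, ∀ z : ℝ, f z = K * (1 - Real.exp (-z)) := by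
  have hne : (1 : ℝ) - Real.exp (-1) ≠ 0 := by
    have : Real.exp (-1) < 1 := by
      rw [Real.exp_lt_one_iff]; norm_num
    linarith
  refine ⟨f 1 / (1 - Real.exp (-1)), fun z => ?_⟩
  have h1 := h z 1
  have h2 := h 1 z
  rw [add_comm 1 z] at h2
  have key : f z * (1 - Real.exp (-1)) = f 1 * (1 - Real.exp (-z)) := by
    nlinarith [h1, h2]
  field_simp
  linarith [key]
end

section
/- Fix a ∈ ℝ with a ≠ 0, and let G be the matrix group of all g(x₁,x₂,x₃,x₄) as above. The commutator of two elements satisfies g(x₁,x₂,x₃,x₄)⁻¹ g(y₁,y₂,y₃,y₄)⁻¹ g(x₁,x₂,x₃,x₄) g(y₁,y₂,y₃,y₄) ∈ { g(u,v,w,0) : u,v,w ∈ ℝ }; hence the commutator subgroup of G is contained in the abelian subgroup { g(u,v,w,0) }. -/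
noncomputable def g (a x₁ x₂ x₃ x₄ : ℝ) : Matrix (Fin 4) (Fin 4) ℝ :=
  !![Real.exp (a * x₄), 0, 0, x₁;
     0, Real.exp x₄, x₄ * Real.exp x₄, x₂;
     0, 0, Real.exp x₄, x₃;
     0, 0, 0, 1]

lemma g_mul (a x₁ x₂ x₃ t y₁ y₂ y₃ s : ℝ) :
    g a x₁ x₂ x₃ t * g a y₁ y₂ y₃ s =
      g a (Real.exp (a*t) * y₁ + x₁)
        (Real.exp t * y₂ + t * Real.exp t * y₃ + x₂)
        (Real.exp t * y₃ + x₃) (t + s) := by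
  ext i j
  fin_cases i <;> fin_cases j <;>
    simp [g, Matrix.mul_apply, Fin.sum_univ_four, Real.exp_add, mul_add, Matrix.vecHead, Matrix.vecTail] <;> ring

lemma g_zero (a : ℝ) : g a 0 0 0 0 = 1 := by
  ext i j
  fin_cases i <;> fin_cases j <;> simp [g, Matrix.one_apply, Matrix.vecHead, Matrix.vecTail]

lemma g_inv (a x₁ x₂ x₃ t : ℝ) :
    (g a x₁ x₂ x₃ t)⁻¹ =
      g a (-(Real.exp (-(a*t)) * x₁))
        (t * Real.exp (-t) * x₃ - Real.exp (-t) * x₂)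
        (-(Real.exp (-t) * x₃)) (-t) := by
  apply Matrix.inv_eq_left_inv
  rw [g_mul, ← g_zero a]
  congr 1 <;> simp [Real.exp_neg] <;> ring

theorem g_commutator (a : ℝ) (ha : a ≠ 0) :
    (∀ x₁ x₂ x₃ x₄ y₁ y₂ y₃ y₄ : ℝ,
      (g a x₁ x₂ x₃ x₄)⁻¹ * (g a y₁ y₂ y₃ y₄)⁻¹ * g a x₁ x₂ x₃ x₄ * g a y₁ y₂ y₃ y₄
        ∈ {M | ∃ u v w : ℝ, M = g a u v w 0}) ∧
    (∀ u v w u' v' w' : ℝ,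
      g a u v w 0 * g a u' v' w' 0 = g a u' v' w' 0 * g a u v w 0) := by
  have mem_aux : ∀ u v w t : ℝ, t = 0 →
      g a u v w t ∈ {M : Matrix (Fin 4) (Fin 4) ℝ | ∃ u v w : ℝ, M = g a u v w 0} := by
    rintro u v w t rfl; exact ⟨u, v, w, rfl⟩
  constructor
  · intro x₁ x₂ x₃ x₄ y₁ y₂ y₃ y₄
    rw [g_inv, g_inv, g_mul, g_mul, g_mul]
    exact mem_aux _ _ _ _ (by ring)
  · intro u v w u' v' w'
    rw [g_mul, g_mul]
    congr 1 <;> simp <;> ring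
end

section
/- Fix a ∈ ℝ, a ∉ {0}. The center of the group G = { g(x₁,x₂,x₃,x₄) : xᵢ ∈ ℝ } (with g as above) is trivial. -/
theorem g_center_trivial (a : ℝ) (ha : a ≠ 0) :
    ∀ M ∈ {M | ∃ x₁ x₂ x₃ x₄ : ℝ, M = g a x₁ x₂ x₃ x₄},
      (∀ N ∈ {M | ∃ x₁ x₂ x₃ x₄ : ℝ, M = g a x₁ x₂ x₃ x₄}, M * N = N * M) →
      M = 1 := by
  rintro M ⟨x₁, x₂, x₃, x₄, rfl⟩ hc
  have h1 := hc (g a 0 0 0 1) ⟨0, 0, 0, 1, rfl⟩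
  have h2 := hc (g a 0 0 1 0) ⟨0, 0, 1, 0, rfl⟩
  have e03 := congrFun (congrFun h1 0) 3
  have e23 := congrFun (congrFun h1 2) 3
  have e13 := congrFun (congrFun h1 1) 3
  have f13 := congrFun (congrFun h2 1) 3
  simp [g, Matrix.mul_apply, Fin.sum_univ_four, Matrix.vecHead, Matrix.vecTail]
    at e03 e23 e13 f13
  -- e03 : x₁ = Real.exp a * x₁ ; e23 : x₃ = Real.exp 1 * x₃
  -- e13 : x₂ = Real.exp 1 * x₂ + Real.exp 1 * x₃ ; f13 : x₄ = 0
  have hexp1 : Real.exp 1 ≠ 1 := by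
    intro h; norm_num [Real.exp_eq_one_iff] at h
  have hexpa : Real.exp a ≠ 1 :=
    fun h => ha ((Real.exp_eq_one_iff a).mp h)
  have hx3 : x₃ = 0 := by
    have h : x₃ * (Real.exp 1 - 1) = 0 := by linear_combination -e23
    rcases mul_eq_zero.mp h with h | h
    · exact h
    · exact absurd (by linarith : Real.exp 1 = 1) hexp1
  have hx1 : x₁ = 0 := by
    have h : x₁ * (Real.exp a - 1) = 0 := by linear_combination -e03
    rcases mul_eq_zero.mp h with h | h
    · exact h
    · exact absurd (by linarith : Real.exp a = 1) hexpa
  have hx2 : x₂ = 0 := by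
    rw [hx3, mul_zero, add_zero] at e13
    have h : x₂ * (Real.exp 1 - 1) = 0 := by linear_combination -e13
    rcases mul_eq_zero.mp h with h | h
    · exact h
    · exact absurd (by linarith : Real.exp 1 = 1) hexp1
  subst hx1 hx2 hx3 f13
  ext i j
  fin_cases i <;> fin_cases j <;>
    simp [g, Matrix.one_apply, Matrix.vecHead, Matrix.vecTail]
end

section
/- Let 𝔤 be the Lie algebra with basis e₁,e₂,e₃,e₄ and brackets [e₁,e₄] = a·e₁, [e₂,e₄] = e₂, [e₃,e₄] = e₂ + e₃, with fixed a ∈ ℝ \ {0,1}. A linear map φ : 𝔤 → 𝔤 given by φ(e₁) = k·e₁, φ(e₂) = l·e₂, φ(e₃) = n·e₂ + l·e₃, φ(e₄) = f₁e₁ + f₂e₂ + f₃e₃ + e₄ with k·l ≠ 0 is a Lie algebra automorphism of 𝔤. -/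
def br (a : ℝ) (x y : Fin 4 → ℝ) : Fin 4 → ℝ :=
  ![a * (x 0 * y 3 - x 3 * y 0),
    (x 1 * y 3 - x 3 * y 1) + (x 2 * y 3 - x 3 * y 2),
    x 2 * y 3 - x 3 * y 2,
    0]

/-- The linear map φ(e₁)=k e₁, φ(e₂)=l e₂, φ(e₃)=n e₂ + l e₃,
φ(e₄)=f₁e₁+f₂e₂+f₃e₃+e₄ in coordinates. -/
def phi (k l n f₁ f₂ f₃ : ℝ) (v : Fin 4 → ℝ) : Fin 4 → ℝ :=
  ![k * v 0 + f₁ * v 3,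
    l * v 1 + n * v 2 + f₂ * v 3,
    l * v 2 + f₃ * v 3,
    v 3]

theorem phi_automorphism (a : ℝ) (ha : a ≠ 0) (ha1 : a ≠ 1)
    (k l n f₁ f₂ f₃ : ℝ) (hkl : k * l ≠ 0) :
    -- φ is linear
    (∀ (c : ℝ) (x y : Fin 4 → ℝ),
      phi k l n f₁ f₂ f₃ (c • x + y) = c • phi k l n f₁ f₂ f₃ x + phi k l n f₁ f₂ f₃ y) ∧
    -- φ is bijective
    Function.Bijective (phi k l n f₁ f₂ f₃) ∧
    -- φ preserves the bracket
    (∀ x y : Fin 4 → ℝ,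
      phi k l n f₁ f₂ f₃ (br a x y) = br a (phi k l n f₁ f₂ f₃ x) (phi k l n f₁ f₂ f₃ y)) := by

  have hk : k ≠ 0 := fun h => hkl (by simp [h])
  have hl : l ≠ 0 := fun h => hkl (by simp [h])
  refine ⟨?_, ?_, ?_⟩
  · intro c x y
    funext i
    fin_cases i <;> simp [phi] <;> ring
  · rw [Function.bijective_iff_has_inverse]
    refine ⟨fun v => ![(v 0 - f₁ * v 3) / k,
      (v 1 - n / l * (v 2 - f₃ * v 3) - f₂ * v 3) / l,
      (v 2 - f₃ * v 3) / l, v 3], ?_, ?_⟩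
    · intro v
      funext i
      fin_cases i <;> simp [phi] <;> field_simp <;> ring
    · intro v
      funext i
      fin_cases i <;> simp [phi] <;> field_simp <;> ring
  · intro x y
    funext i
    fin_cases i <;> simp [phi, br] <;> ring
end

section
/- Fix a ∈ ℝ, a ≠ 0, and a continuous function f : ℝ² → ℝ with f(0,0) = 0. Define a binary operation on ℝ³ by (x₁,y₁,z₁) * (x₂,y₂,z₂) = (x₁ + e^{a z₁} x₂, y₁ + y₂ e^{z₁} − z₂ e^{z₁} f(x₁,z₁), z₁ + z₂). Then (ℝ³, *) is a loop with identity (0,0,0): for all (a₁,a₂,a₃), (b₁,b₂,b₃) ∈ ℝ³, each of the equations (a₁,a₂,a₃) * y = (b₁,b₂,b₃) and x * (a₁,a₂,a₃) = (b₁,b₂,b₃) has a unique solution. -/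
/-- The loop multiplication (x₁,y₁,z₁)*(x₂,y₂,z₂) =
(x₁ + e^{a z₁} x₂, y₁ + y₂ e^{z₁} − z₂ e^{z₁} f(x₁,z₁), z₁+z₂). -/
noncomputable def lmul (a : ℝ) (f : ℝ × ℝ → ℝ) (p q : ℝ × ℝ × ℝ) : ℝ × ℝ × ℝ :=
  (p.1 + Real.exp (a * p.2.2) * q.1,
   p.2.1 + q.2.1 * Real.exp p.2.2 - q.2.2 * Real.exp p.2.2 * f (p.1, p.2.2),
   p.2.2 + q.2.2)

theorem lmul_is_loop (a : ℝ) (ha : a ≠ 0) (f : ℝ × ℝ → ℝ)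
    (hf : Continuous f) (hf0 : f (0, 0) = 0) :
    (∀ p : ℝ × ℝ × ℝ, lmul a f ((0,0,0) : ℝ × ℝ × ℝ) p = p) ∧
    (∀ p : ℝ × ℝ × ℝ, lmul a f p ((0,0,0) : ℝ × ℝ × ℝ) = p) ∧
    (∀ p b : ℝ × ℝ × ℝ, ∃! y : ℝ × ℝ × ℝ, lmul a f p y = b) ∧
    (∀ p b : ℝ × ℝ × ℝ, ∃! x : ℝ × ℝ × ℝ, lmul a f x p = b) := by
  have he : ∀ t : ℝ, Real.exp t ≠ 0 := fun t => (Real.exp_pos t).ne'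
  refine ⟨?_, ?_, ?_, ?_⟩
  · rintro ⟨x, y, z⟩
    simp [lmul]
    exact Or.inr hf0
  · rintro ⟨x, y, z⟩
    simp [lmul]
  · rintro ⟨p1, p2, p3⟩ ⟨b1, b2, b3⟩
    refine ⟨((b1 - p1) / Real.exp (a * p3),
      (b2 - p2 + (b3 - p3) * Real.exp p3 * f (p1, p3)) / Real.exp p3,
      b3 - p3), ?_, ?_⟩
    · simp only [lmul, Prod.mk.injEq]
      refine ⟨by field_simp; ring, by field_simp; ring, by ring⟩
    · rintro ⟨y1, y2, y3⟩ h
      simp only [lmul, Prod.mk.injEq] at h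
      obtain ⟨h1, h2, h3⟩ := h
      have hy3 : y3 = b3 - p3 := by linarith
      subst hy3
      have hy1 : y1 = (b1 - p1) / Real.exp (a * p3) := by
        field_simp; linarith
      have hy2 : y2 = (b2 - p2 + (b3 - p3) * Real.exp p3 * f (p1, p3)) / Real.exp p3 := by
        field_simp; linarith
      simp [hy1, hy2]
  · rintro ⟨p1, p2, p3⟩ ⟨b1, b2, b3⟩
    set x3 := b3 - p3 with hx3
    set x1 := b1 - Real.exp (a * x3) * p1 with hx1
    refine ⟨(x1, b2 - p2 * Real.exp x3 + p3 * Real.exp x3 * f (x1, x3), x3),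
      ?_, ?_⟩
    · simp only [lmul, Prod.mk.injEq]
      refine ⟨by ring, by ring, by ring⟩
    · rintro ⟨y1, y2, y3⟩ h
      simp only [lmul, Prod.mk.injEq] at h
      obtain ⟨h1, h2, h3⟩ := h
      have hy3 : y3 = x3 := by rw [hx3]; linarith
      subst hy3
      have hy1 : y1 = x1 := by rw [hx1]; linarith
      subst hy1
      have hy2 : y2 = b2 - p2 * Real.exp x3 + p3 * Real.exp x3 * f (x1, x3) := by linarith
      simp [hy2]
end

section
/- Fix a ∈ ℝ, a ≠ 0, and let G be the matrix group of all g(x₁,x₂,x₃,x₄) with g as above, and H₁ = { g(0,0,k,0) : k ∈ ℝ }. Then every element of G has a unique decomposition g(x,y,0,z)·g(0,0,k,0) with x,y,z,k ∈ ℝ; i.e. the set { g(x,y,0,z) : x,y,z ∈ ℝ } is a transversal of the left cosets of H₁ in G. -/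
lemma g_mul_s14 (a x y z k : ℝ) :
    g a x y 0 z * g a 0 0 k 0 = g a x (y + z * Real.exp z * k) (Real.exp z * k) z := by
  ext i j
  fin_cases i <;> fin_cases j <;>
    simp [g, Matrix.mul_apply, Fin.sum_univ_four, Matrix.vecHead, Matrix.vecTail] <;> ring

theorem unique_decomposition_H1 (a : ℝ) (ha : a ≠ 0) :
    ∀ M ∈ {M | ∃ x₁ x₂ x₃ x₄ : ℝ, M = g a x₁ x₂ x₃ x₄},
      ∃! q : ℝ × ℝ × ℝ × ℝ,
        M = g a q.1 q.2.1 0 q.2.2.1 * g a 0 0 q.2.2.2 0 := by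
  rintro M ⟨x₁, x₂, x₃, x₄, rfl⟩
  have hex : Real.exp x₄ * (x₃ * Real.exp (-x₄)) = x₃ := by
    rw [← mul_assoc, mul_comm (Real.exp x₄) x₃, mul_assoc, ← Real.exp_add]
    simp
  refine ⟨(x₁, x₂ - x₄ * x₃, x₄, x₃ * Real.exp (-x₄)), ?_, ?_⟩
  · show g a x₁ x₂ x₃ x₄ = _
    rw [g_mul_s14, mul_assoc x₄, hex]
    norm_num
  · rintro ⟨x, y, z, k⟩ h
    rw [g_mul_s14] at h
    simp only at h
    have h00 := congrFun (congrFun h 0) 0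
    have h03 := congrFun (congrFun h 0) 3
    have h13 := congrFun (congrFun h 1) 3
    have h23 := congrFun (congrFun h 2) 3
    simp [g] at h00 h03 h13 h23
    have hz : x₄ = z := by tauto
    subst hz
    have hk : k = x₃ * Real.exp (-x₄) := by
      rw [h23, Real.exp_neg, mul_comm (Real.exp x₄) k, mul_assoc]
      simp [Real.exp_ne_zero]
    have hy : y = x₂ - x₄ * x₃ := by
      rw [h13, h23]; ring
    simp [h03, hy, hk]
end

section
/- Let L be a loop with multiplication group Mult(L) and inner mapping group Inn(L) (the stabilizer of the identity of L in Mult(L)). Then the normalizer of Inn(L) in Mult(L) equals the internal direct product Inn(L) × Z(Mult(L)), where Z(Mult(L)) is the center of Mult(L). In particular Inn(L) ∩ Z(Mult(L)) = 1 and Z(Mult(L)) normalizes Inn(L). -/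
/-- A loop: a binary system with two-sided identity whose left and right
translations are bijections (packaged as permutations). -/
structure LoopStr (L : Type*) where
  mul : L → L → L
  one : L
  one_mul : ∀ x, mul one x = x
  mul_one : ∀ x, mul x one = x
  lperm : L → Equiv.Perm L
  rperm : L → Equiv.Perm L
  lperm_apply : ∀ a x, lperm a x = mul a x
  rperm_apply : ∀ a x, rperm a x = mul x a

/-- The multiplication group: the permutation group generated by all left and
right translations. -/
def LoopStr.Mult {L : Type*} (Q : LoopStr L) : Subgroup (Equiv.Perm L) :=
  Subgroup.closure (Set.range Q.lperm ∪ Set.range Q.rperm)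

/-- The inner mapping group: the stabilizer of the identity in Mult(L). -/
def LoopStr.Inn {L : Type*} (Q : LoopStr L) : Subgroup Q.Mult where
  carrier := {φ | (φ : Equiv.Perm L) Q.one = Q.one}
  one_mem' := rfl
  mul_mem' := by
    intro x y hx hy
    simp only [Set.mem_setOf_eq] at *
    simp [Equiv.Perm.mul_apply, hy, hx]
  inv_mem' := by
    intro x hx
    simp only [Set.mem_setOf_eq] at *
    have : ((x : Equiv.Perm L)).symm Q.one = Q.one := (Equiv.symm_apply_eq _).mpr hx.symm
    simpa using this


section
variable {L : Type*} (Q : LoopStr L)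

lemma lmem (a : L) : Q.lperm a ∈ Q.Mult :=
  Subgroup.subset_closure (Or.inl ⟨a, rfl⟩)

lemma rmem (a : L) : Q.rperm a ∈ Q.Mult :=
  Subgroup.subset_closure (Or.inr ⟨a, rfl⟩)

def La (a : L) : ↥Q.Mult := ⟨Q.lperm a, lmem Q a⟩
def Ra (a : L) : ↥Q.Mult := ⟨Q.rperm a, rmem Q a⟩

lemma mem_Inn_iff (φ : ↥Q.Mult) : φ ∈ Q.Inn ↔ (φ : Equiv.Perm L) Q.one = Q.one := Iff.rfl

lemma lperm_inv (a x : L) : (Q.lperm a)⁻¹ (Q.mul a x) = x := by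
  rw [← Q.lperm_apply]; exact Equiv.symm_apply_apply _ _

lemma rperm_inv (a x : L) : (Q.rperm a)⁻¹ (Q.mul x a) = x := by
  rw [← Q.rperm_apply]; exact Equiv.symm_apply_apply _ _

lemma innA (a : L) : (Ra Q a)⁻¹ * La Q a ∈ Q.Inn := by
  show (Q.rperm a)⁻¹ (Q.lperm a Q.one) = Q.one
  rw [Q.lperm_apply, Q.mul_one]
  have := rperm_inv Q a Q.one
  rwa [Q.one_mul] at this

lemma innB (a b : L) : (La Q (Q.mul a b))⁻¹ * (La Q a * La Q b) ∈ Q.Inn := by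
  show (Q.lperm (Q.mul a b))⁻¹ (Q.lperm a (Q.lperm b Q.one)) = Q.one
  rw [Q.lperm_apply, Q.lperm_apply, Q.mul_one]
  have := lperm_inv Q (Q.mul a b) Q.one
  rwa [Q.mul_one] at this

lemma innC (a b : L) : (Ra Q (Q.mul b a))⁻¹ * (Ra Q a * Ra Q b) ∈ Q.Inn := by
  show (Q.rperm (Q.mul b a))⁻¹ (Q.rperm a (Q.rperm b Q.one)) = Q.one
  rw [Q.rperm_apply, Q.rperm_apply, Q.one_mul]
  have := rperm_inv Q (Q.mul b a) Q.one
  rwa [Q.one_mul] at this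

/-- If every inner mapping fixes `c`, then `c` commutes with everything. -/
lemma comm_of_fixed {c : L} (hc : ∀ h ∈ Q.Inn, (h : Equiv.Perm L) c = c) (a : L) :
    Q.mul a c = Q.mul c a := by
  have := hc _ (innA Q a)
  have h : (Q.rperm a)⁻¹ (Q.lperm a c) = c := this
  rw [Q.lperm_apply] at h
  have h2 := congrArg (Q.rperm a) h
  rw [show ∀ (e : Equiv.Perm L) y, e (e⁻¹ y) = y from fun e y => e.apply_symm_apply y, Q.rperm_apply] at h2
  exact h2

lemma assocB_of_fixed {c : L} (hc : ∀ h ∈ Q.Inn, (h : Equiv.Perm L) c = c) (a b : L) :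
    Q.mul a (Q.mul b c) = Q.mul (Q.mul a b) c := by
  have h : (Q.lperm (Q.mul a b))⁻¹ (Q.lperm a (Q.lperm b c)) = c := hc _ (innB Q a b)
  rw [Q.lperm_apply, Q.lperm_apply] at h
  have h2 := congrArg (Q.lperm (Q.mul a b)) h
  rw [show ∀ (e : Equiv.Perm L) y, e (e⁻¹ y) = y from fun e y => e.apply_symm_apply y, Q.lperm_apply] at h2
  exact h2

lemma assocC_of_fixed {c : L} (hc : ∀ h ∈ Q.Inn, (h : Equiv.Perm L) c = c) (a b : L) :
    Q.mul (Q.mul c b) a = Q.mul c (Q.mul b a) := by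
  have h : (Q.rperm (Q.mul b a))⁻¹ (Q.rperm a (Q.rperm b c)) = c := hc _ (innC Q a b)
  rw [Q.rperm_apply, Q.rperm_apply] at h
  have h2 := congrArg (Q.rperm (Q.mul b a)) h
  rw [show ∀ (e : Equiv.Perm L) y, e (e⁻¹ y) = y from fun e y => e.apply_symm_apply y, Q.rperm_apply] at h2
  exact h2

/-- If every inner mapping fixes `c`, then left translation by `c` is central in Mult. -/
lemma lperm_central {c : L} (hc : ∀ h ∈ Q.Inn, (h : Equiv.Perm L) c = c) :
    (⟨Q.lperm c, lmem Q c⟩ : ↥Q.Mult) ∈ Subgroup.center ↥Q.Mult := by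
  have key : ∀ g ∈ Q.Mult, g * Q.lperm c = Q.lperm c * g := by
    have : Q.Mult ≤ Subgroup.centralizer {Q.lperm c} := by
      rw [LoopStr.Mult, Subgroup.closure_le]
      rintro g (⟨a, rfl⟩ | ⟨a, rfl⟩) <;>
        refine Subgroup.mem_centralizer_iff.mpr ?_ <;>
        rintro _ rfl <;> ext x
      · -- lperm c * lperm a = lperm a * lperm c
        show Q.lperm c (Q.lperm a x) = Q.lperm a (Q.lperm c x)
        simp only [Q.lperm_apply]
        calc Q.mul c (Q.mul a x) = Q.mul (Q.mul a x) c := (comm_of_fixed Q hc _).symm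
          _ = Q.mul a (Q.mul x c) := (assocB_of_fixed Q hc a x).symm
          _ = Q.mul a (Q.mul c x) := by rw [comm_of_fixed Q hc]
      · show Q.lperm c (Q.rperm a x) = Q.rperm a (Q.lperm c x)
        simp only [Q.lperm_apply, Q.rperm_apply]
        exact (assocC_of_fixed Q hc a x).symm
    intro g hg
    have := this hg
    rw [Subgroup.mem_centralizer_iff] at this
    exact (this _ rfl).symm
  rw [Subgroup.mem_center_iff]
  intro g
  exact Subtype.ext (key g.1 g.2)

end

theorem normalizer_Inn (L : Type*) (Q : LoopStr L) :
    Subgroup.normalizer (Q.Inn : Set ↥Q.Mult) = Q.Inn ⊔ Subgroup.center ↥Q.Mult ∧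
    Q.Inn ⊓ Subgroup.center ↥Q.Mult = ⊥ ∧
    Subgroup.center ↥Q.Mult ≤ Subgroup.normalizer (Q.Inn : Set ↥Q.Mult) := by
  have hcen : Subgroup.center ↥Q.Mult ≤ Subgroup.normalizer (Q.Inn : Set ↥Q.Mult) := by
    intro z hz
    rw [Subgroup.mem_normalizer_iff]
    intro h
    have hz' := (Subgroup.mem_center_iff.mp hz) h
    rw [← hz', mul_assoc, mul_inv_cancel, mul_one]
  have hinf : Q.Inn ⊓ Subgroup.center ↥Q.Mult = ⊥ := by
    rw [Subgroup.eq_bot_iff_forall]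
    rintro z ⟨hzI, hzC⟩
    have hz1 : (z : Equiv.Perm L) Q.one = Q.one := hzI
    have : ∀ a : L, (z : Equiv.Perm L) a = a := by
      intro a
      have hcomm := (Subgroup.mem_center_iff.mp hzC) (La Q a)
      have := congrArg (fun g : ↥Q.Mult => (g : Equiv.Perm L) Q.one) hcomm
      simp only [Subgroup.coe_mul, Equiv.Perm.mul_apply] at this
      -- this : z (lperm a one) = lperm a (z one)
      have h1 : Q.lperm a Q.one = a := by rw [Q.lperm_apply, Q.mul_one]
      rw [show ((La Q a : ↥Q.Mult) : Equiv.Perm L) = Q.lperm a from rfl] at this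
      rw [h1, hz1, h1] at this
      exact this.symm
    ext x
    exact this x
  refine ⟨le_antisymm ?_ ?_, hinf, hcen⟩
  · -- normalizer ≤ Inn ⊔ center
    intro θ hθ
    set c : L := (θ : Equiv.Perm L) Q.one with hc
    have hfix : ∀ h ∈ Q.Inn, (h : Equiv.Perm L) c = c := by
      intro h hh
      have hinv : θ⁻¹ ∈ Subgroup.normalizer (Q.Inn : Set ↥Q.Mult) := (Subgroup.normalizer (Q.Inn : Set ↥Q.Mult)).inv_mem hθ
      have : θ⁻¹ * h * θ⁻¹⁻¹ ∈ Q.Inn := ((Subgroup.mem_normalizer_iff.mp hinv) h).mp hh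
      rw [inv_inv] at this
      have h1 : ((θ⁻¹ * h * θ : ↥Q.Mult) : Equiv.Perm L) Q.one = Q.one := this
      simp only [Subgroup.coe_mul, Subgroup.coe_inv, Equiv.Perm.mul_apply] at h1
      -- h1 : θ⁻¹ (h (θ one)) = one
      have := (Equiv.symm_apply_eq _).mp h1
      exact this
    have hzc := lperm_central Q hfix
    set zc : ↥Q.Mult := ⟨Q.lperm c, lmem Q c⟩ with hzcdef
    have hzce : (zc : Equiv.Perm L) Q.one = c := by
      show Q.lperm c Q.one = c
      rw [Q.lperm_apply, Q.mul_one]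
    have hInn : zc⁻¹ * θ ∈ Q.Inn := by
      show ((zc⁻¹ * θ : ↥Q.Mult) : Equiv.Perm L) Q.one = Q.one
      simp only [Subgroup.coe_mul, Subgroup.coe_inv, Equiv.Perm.mul_apply]
      rw [← hc]
      exact (Equiv.symm_apply_eq _).mpr hzce.symm
    have : θ = zc * (zc⁻¹ * θ) := by group
    rw [this, sup_comm]
    exact Subgroup.mul_mem_sup hzc hInn
  · exact sup_le Subgroup.le_normalizer hcen
end
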